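/- Let G = N ⋊ M be a semidirect product of groups, where N is finitely generated and every subgroup of N is separable in N, and where M is subgroup separable (every finitely generated subgroup of M is separable in M). Then G is subgroup separable: every finitely generated subgroup of G is separable in G. -/

import Mathlib

open Subgroup Pointwise

open SemidirectProduct

section AuxCounting

lemma aux_finite_monoidHom {G P : Type*} [Group G] [Group P] [Finite P]
    (hG : Group.FG G) : Finite (G →* P) := by
  obtain ⟨S, hS⟩ := hG.1
  have hinj : Function.Injective (fun (f : G →* P) => (fun s : S => f s)) := by
    intro f g h
    refine MonoidHom.eq_of_eqOn_dense hS ?_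
    intro x hx
    exact congrFun h ⟨x, hx⟩
  exact Finite.of_injective _ hinj

lemma aux_finite_subgroups {G : Type*} [Group G] (hG : Group.FG G) (n : ℕ) (hn : n ≠ 0) :
    Finite {H : Subgroup G // H.index = n} := by
  have key : ∀ H : {H : Subgroup G // H.index = n}, ∃ p : (G →* Equiv.Perm (Fin n)) × Fin n,
      ∀ x : G, x ∈ H.1 ↔ p.1 x p.2 = p.2 := by
    rintro ⟨H, hH⟩
    have hcard : Nat.card (G ⧸ H) = n := hH
    have hfin : Finite (G ⧸ H) := (Nat.card_ne_zero.mp (hcard ▸ hn)).2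
    let e : G ⧸ H ≃ Fin n := Finite.equivFinOfCardEq hcard
    have comp_eq : ∀ (x : G) (q : Fin n),
        (e.symm.trans ((MulAction.toPermHom G (G ⧸ H) x).trans e)) q = e (x • (e.symm q)) := by
      intro x q; rfl
    refine ⟨⟨{ toFun := fun x => e.symm.trans ((MulAction.toPermHom G (G ⧸ H) x).trans e)
               map_one' := by ext q; simp [comp_eq]
               map_mul' := by
                 intro x y; ext q
                 simp [comp_eq, Equiv.Perm.mul_apply, mul_smul] },
             e ((1 : G) : G ⧸ H)⟩, ?_⟩
    intro x
    simp only [MonoidHom.coe_mk, OneHom.coe_mk, comp_eq, Equiv.symm_apply_apply]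
    rw [e.apply_eq_iff_eq]
    have h1 : x • ((1 : G) : G ⧸ H) = ((x : G) : G ⧸ H) := by
      rw [MulAction.Quotient.smul_mk, smul_eq_mul, mul_one]
    rw [h1, QuotientGroup.eq]
    simp
  choose p hp using key
  have hinj : Function.Injective p := by
    intro H H' h
    ext1
    ext x
    rw [hp H x, hp H' x, h]
  haveI : Finite (G →* Equiv.Perm (Fin n)) := aux_finite_monoidHom hG
  exact Finite.of_injective p hinj

lemma aux_fg_map {G G' : Type*} [Group G] [Group G'] (f : G →* G') {K : Subgroup G}
    (h : K.FG) : (K.map f).FG := by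
  classical
  obtain ⟨S, hS⟩ := h
  exact ⟨S.image f, by rw [Finset.coe_image, ← MonoidHom.map_closure, hS]⟩

end AuxCounting

section AuxMix

variable {N M : Type*} [Group N] [Group M] (φ : M →* MulAut N)

lemma aux_phi_comp (m : M) (w : N) : φ m (φ m⁻¹ w) = w := by
  rw [← MulAut.mul_apply, ← map_mul, mul_inv_cancel, map_one, MulAut.one_apply]

def mixSub (C : Subgroup N) (V : Subgroup M) (hC : ∀ (m : M) (x : N), x ∈ C → φ m x ∈ C) :
    Subgroup (N ⋊[φ] M) where
  carrier := {x | x.left ∈ C ∧ x.right ∈ V}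
  one_mem' := ⟨by simp only [one_left]; exact one_mem C, by simp only [one_right]; exact one_mem V⟩
  mul_mem' := by
    rintro a b ⟨ha1, ha2⟩ ⟨hb1, hb2⟩
    exact ⟨by rw [mul_left]; exact mul_mem ha1 (hC _ _ hb1),
           by rw [mul_right]; exact mul_mem ha2 hb2⟩
  inv_mem' := by
    rintro a ⟨ha1, ha2⟩
    exact ⟨by rw [inv_left]; exact hC _ _ (inv_mem ha1),
           by rw [inv_right]; exact inv_mem ha2⟩

lemma mem_mixSub {C : Subgroup N} {V : Subgroup M} {hC : ∀ (m : M) (x : N), x ∈ C → φ m x ∈ C}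
    {x : N ⋊[φ] M} : x ∈ mixSub φ C V hC ↔ x.left ∈ C ∧ x.right ∈ V := Iff.rfl

lemma mixSub_normal (C : Subgroup N) (V : Subgroup M) (hC : ∀ (m : M) (x : N), x ∈ C → φ m x ∈ C)
    (hCn : C.Normal) (hVn : V.Normal)
    (hker : ∀ m ∈ V, ∀ x : N, φ m x * x⁻¹ ∈ C) : (mixSub φ C V hC).Normal := by
  constructor
  rintro x ⟨hx1, hx2⟩ g
  have hright : (g * x * g⁻¹).right = g.right * x.right * g.right⁻¹ := by
    simp [mul_right, inv_right, mul_assoc]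
  constructor
  · have h1 : (g * x * g⁻¹).left
        = g.left * (φ g.right x.left *
            (φ (g.right * x.right * g.right⁻¹) g.left⁻¹ * g.left)) * g.left⁻¹ := by
      simp only [mul_left, inv_left, mul_right, ← MulAut.mul_apply, ← map_mul]
      group
    rw [h1]
    refine hCn.conj_mem _ (mul_mem (hC _ _ hx1) ?_) _
    simpa using hker _ (hVn.conj_mem _ hx2 g.right) g.left⁻¹
  · rw [hright]
    exact hVn.conj_mem _ hx2 _

lemma mixSub_finiteIndex (C : Subgroup N) (V : Subgroup M)
    (hC : ∀ (m : M) (x : N), x ∈ C → φ m x ∈ C)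
    (hfC : C.FiniteIndex) (hfV : V.FiniteIndex) : (mixSub φ C V hC).FiniteIndex := by
  haveI : Finite (N ⧸ C) := C.finite_quotient_of_finiteIndex
  haveI : Finite (M ⧸ V) := V.finite_quotient_of_finiteIndex
  have hleft : ∀ x y : N ⋊[φ] M, x⁻¹ * y ∈ mixSub φ C V hC ↔
      (x.left⁻¹ * y.left ∈ C ∧ x.right⁻¹ * y.right ∈ V) := by
    intro x y
    rw [mem_mixSub]
    have h1 : (x⁻¹ * y).left = φ x.right⁻¹ (x.left⁻¹ * y.left) := by
      simp [mul_left, inv_left, inv_right, map_mul]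
    have h2 : (x⁻¹ * y).right = x.right⁻¹ * y.right := by simp [mul_right, inv_right]
    rw [h1, h2]
    constructor
    · rintro ⟨ha, hb⟩
      refine ⟨?_, hb⟩
      have := hC x.right _ ha
      rwa [aux_phi_comp] at this
    · rintro ⟨ha, hb⟩
      exact ⟨hC _ _ ha, hb⟩
  have hf : Finite ((N ⋊[φ] M) ⧸ mixSub φ C V hC) := by
    let f : ((N ⋊[φ] M) ⧸ mixSub φ C V hC) → (N ⧸ C) × (M ⧸ V) := fun q =>
      Quotient.liftOn' q (fun x => ((x.left : N ⧸ C), (x.right : M ⧸ V))) (by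
        intro x y h
        rw [QuotientGroup.leftRel_apply, hleft] at h
        exact Prod.ext (QuotientGroup.eq.mpr h.1) (QuotientGroup.eq.mpr h.2))
    have hinj : Function.Injective f := by
      intro q q'
      refine Quotient.inductionOn₂' q q' ?_
      intro x y h
      have h1 : ((x.left : N ⧸ C), (x.right : M ⧸ V)) = ((y.left : N ⧸ C), (y.right : M ⧸ V)) := h
      rw [Prod.mk.injEq] at h1
      apply Quotient.sound'
      rw [QuotientGroup.leftRel_apply, hleft]
      exact ⟨QuotientGroup.eq.mp h1.1, QuotientGroup.eq.mp h1.2⟩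
    exact Finite.of_injective f hinj
  exact @Subgroup.finiteIndex_of_finite_quotient _ _ _ hf

def kerQuot (C : Subgroup N) (hC : ∀ (m : M) (x : N), x ∈ C → φ m x ∈ C)
    (hCn : C.Normal) : Subgroup M where
  carrier := {m | ∀ x : N, φ m x * x⁻¹ ∈ C}
  one_mem' := by intro x; simp only [map_one, MulAut.one_apply, mul_inv_cancel]; exact one_mem C
  mul_mem' := by
    intro m m' hm hm' x
    have h1 : φ m (φ m' x * x⁻¹) ∈ C := hC _ _ (hm' x)
    have h2 : φ (m * m') x * x⁻¹ = (φ m (φ m' x * x⁻¹)) * (φ m x * x⁻¹) := by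
      rw [map_mul φ, MulAut.mul_apply, map_mul (φ m)]
      simp [mul_assoc]
    rw [h2]
    exact mul_mem h1 (hm x)
  inv_mem' := by
    intro m hm x
    have h := hm (φ m⁻¹ x)
    rw [aux_phi_comp] at h
    have := inv_mem h
    simpa using this

lemma kerQuot_normal (C : Subgroup N) (hC : ∀ (m : M) (x : N), x ∈ C → φ m x ∈ C)
    (hCn : C.Normal) : (kerQuot φ C hC hCn).Normal := by
  constructor
  intro m₀ hm₀ m x
  have h1 : φ (m * m₀ * m⁻¹) x * x⁻¹ = φ m (φ m₀ (φ m⁻¹ x) * (φ m⁻¹ x)⁻¹) := by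
    simp only [map_mul, map_inv, MulAut.mul_apply, MulAut.apply_inv_self]
  rw [h1]
  exact hC _ _ (hm₀ (φ m⁻¹ x))

lemma kerQuot_finiteIndex (C : Subgroup N) (hC : ∀ (m : M) (x : N), x ∈ C → φ m x ∈ C)
    (hCn : C.Normal) (hfC : C.FiniteIndex) : (kerQuot φ C hC hCn).FiniteIndex := by
  haveI : Finite (N ⧸ C) := C.finite_quotient_of_finiteIndex
  let F2 : M → ((N ⧸ C) → (N ⧸ C)) := fun m q =>
    Quotient.liftOn' q (fun x => ((φ m x : N) : N ⧸ C)) (by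
      intro x y h
      rw [QuotientGroup.leftRel_apply] at h
      apply QuotientGroup.eq.mpr
      have : (φ m x)⁻¹ * (φ m y) = φ m (x⁻¹ * y) := by rw [map_mul, map_inv]
      rw [this]
      exact hC _ _ h)
  have hF2mk : ∀ (m : M) (x : N), F2 m (x : N ⧸ C) = ((φ m x : N) : N ⧸ C) := fun m x => rfl
  have hiff : ∀ m m' : M, m⁻¹ * m' ∈ kerQuot φ C hC hCn ↔ F2 m = F2 m' := by
    intro m m'
    constructor
    · intro h
      funext q
      refine Quotient.inductionOn' q ?_
      intro x
      have h0 := h x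
      rw [map_mul φ, MulAut.mul_apply] at h0
      have h1 : φ m (φ m⁻¹ (φ m' x) * x⁻¹) ∈ C := hC _ _ h0
      rw [map_mul (φ m), aux_phi_comp] at h1
      have h2 : (φ m x)⁻¹ * (φ m' x * φ m (x⁻¹)) * ((φ m x)⁻¹)⁻¹ ∈ C := hCn.conj_mem _ h1 _
      have h3 : (φ m x)⁻¹ * (φ m' x * φ m (x⁻¹)) * ((φ m x)⁻¹)⁻¹ = (φ m x)⁻¹ * φ m' x := by
        rw [map_inv]; group
      rw [h3] at h2
      show ((φ m x : N) : N ⧸ C) = ((φ m' x : N) : N ⧸ C)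
      exact QuotientGroup.eq.mpr h2
    · intro h x
      have h0 : ((φ m x : N) : N ⧸ C) = ((φ m' x : N) : N ⧸ C) := by
        rw [← hF2mk, ← hF2mk, h]
      have h1 : (φ m x)⁻¹ * φ m' x ∈ C := QuotientGroup.eq.mp h0
      have h2 : φ m⁻¹ ((φ m x)⁻¹ * φ m' x) ∈ C := hC _ _ h1
      have e1 : φ m⁻¹ ((φ m x)⁻¹ * φ m' x) = x⁻¹ * φ m⁻¹ (φ m' x) := by
        simp only [map_mul, map_inv, MulAut.inv_apply_self]
      rw [e1] at h2
      have h3 : x * (x⁻¹ * φ m⁻¹ (φ m' x)) * x⁻¹ ∈ C := hCn.conj_mem _ h2 _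
      have h4 : x * (x⁻¹ * φ m⁻¹ (φ m' x)) * x⁻¹ = φ (m⁻¹ * m') x * x⁻¹ := by
        rw [map_mul φ, MulAut.mul_apply]; group
      rwa [h4] at h3
  have hf : Finite (M ⧸ kerQuot φ C hC hCn) := by
    let f : (M ⧸ kerQuot φ C hC hCn) → ((N ⧸ C) → (N ⧸ C)) := fun q =>
      Quotient.liftOn' q F2 (by
        intro m m' h
        rw [QuotientGroup.leftRel_apply] at h
        exact (hiff m m').mp h)
    have hinj : Function.Injective f := by
      intro q q'
      refine Quotient.inductionOn₂' q q' ?_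
      intro m m' h
      apply Quotient.sound'
      rw [QuotientGroup.leftRel_apply]
      exact (hiff m m').mpr h
    exact Finite.of_injective f hinj
  exact @Subgroup.finiteIndex_of_finite_quotient _ _ _ hf

end AuxMix

/-- Let `G = N ⋊ M`, where `N` is finitely generated and ERF (every
subgroup of `N` is separable in `N`) and `M` is subgroup separable.  Then `G` is
subgroup separable: every finitely generated subgroup `K` of `G` is separable in `G`. -/
theorem stmt_19 (N : Type*) [Group N] (M : Type*) [Group M] (φ : M →* MulAut N)
    (hNfg : Group.FG N)
    (hNerf : ∀ K : Subgroup N, ∀ g : N, g ∉ K →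
      ∃ L : Subgroup N, L.Normal ∧ L.FiniteIndex ∧ g ∉ ((K : Set N) * (L : Set N)))
    (hMss : ∀ K : Subgroup M, K.FG → ∀ g : M, g ∉ K →
      ∃ L : Subgroup M, L.Normal ∧ L.FiniteIndex ∧ g ∉ ((K : Set M) * (L : Set M))) :
    ∀ K : Subgroup (N ⋊[φ] M), K.FG → ∀ g : N ⋊[φ] M, g ∉ K →
      ∃ L : Subgroup (N ⋊[φ] M), L.Normal ∧ L.FiniteIndex ∧
        g ∉ ((K : Set (N ⋊[φ] M)) * (L : Set (N ⋊[φ] M))) := by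
  intro K hK g hg
  by_cases hc : rightHom g ∈ K.map (rightHom : N ⋊[φ] M →* M)
  case neg =>
    obtain ⟨LM, hLMn, hLMf, hLMs⟩ := hMss (K.map rightHom) (aux_fg_map _ hK) (rightHom g) hc
    refine ⟨LM.comap rightHom, hLMn.comap _, ?_, ?_⟩
    · refine ⟨?_⟩
      rw [Subgroup.index_comap_of_surjective _ rightHom_surjective]
      exact hLMf.index_ne_zero
    · intro hmem
      obtain ⟨k, hk, l, hl, hkl⟩ := hmem
      refine hLMs ?_
      rw [← hkl, map_mul]
      exact Set.mul_mem_mul (Subgroup.mem_map.mpr ⟨k, hk, rfl⟩) (Subgroup.mem_comap.mp hl)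
  case pos =>
    rw [Subgroup.mem_map] at hc
    obtain ⟨k₀, hk₀K, hk₀⟩ := hc
    set a : N := (g * k₀⁻¹).left with ha
    have hright1 : (g * k₀⁻¹).right = 1 := by
      have h1 : rightHom (g * k₀⁻¹) = 1 := by
        rw [map_mul, map_inv, hk₀, mul_inv_cancel]
      rwa [rightHom_eq_right] at h1
    have hga : g = inl a * k₀ := by
      have h1 : g * k₀⁻¹ = inl a := by
        conv_lhs => rw [← inl_left_mul_inr_right (g * k₀⁻¹)]
        rw [hright1, map_one, mul_one]
      rw [← h1]; group
    set D : Subgroup N := K.comap (inl : N →* N ⋊[φ] M) with hDdef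
    have haD : a ∉ D := by
      intro h
      exact hg (hga ▸ mul_mem (Subgroup.mem_comap.mp h) hk₀K)
    obtain ⟨LN, hLNn, hLNf, hLNs⟩ := hNerf D a haD
    haveI := aux_finite_subgroups hNfg LN.index hLNf.index_ne_zero
    set C : Subgroup N := ⨅ (H : {H : Subgroup N // H.index = LN.index}), H.1 with hCdef
    have hC : ∀ (σ : MulAut N) (x : N), x ∈ C → σ x ∈ C := by
      intro σ x hx
      rw [hCdef, Subgroup.mem_iInf] at hx ⊢
      rintro ⟨H, hH⟩
      have hidx : (H.comap σ.toMonoidHom).index = LN.index := by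
        rw [Subgroup.index_comap_of_surjective _ σ.surjective]; exact hH
      exact Subgroup.mem_comap.mp (hx ⟨H.comap σ.toMonoidHom, hidx⟩)
    have hCphi : ∀ (m : M) (x : N), x ∈ C → φ m x ∈ C := fun m => hC (φ m)
    have hCn : C.Normal := by
      constructor
      intro x hx g'
      have h1 := hC (MulAut.conj g') x hx
      rwa [MulAut.conj_apply] at h1
    have hCle : C ≤ LN := iInf_le (fun H : {H : Subgroup N // H.index = LN.index} => H.1) ⟨LN, rfl⟩
    have hCf : C.FiniteIndex := by
      apply Subgroup.finiteIndex_iInf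
      rintro ⟨H, hH⟩
      refine ⟨?_⟩
      rw [hH]
      exact hLNf.index_ne_zero
    -- the subgroup W = K ⊔ inl(C)
    set C'' := mixSub φ C ⊥ hCphi with hC''def
    haveI hC''n : C''.Normal := by
      refine mixSub_normal φ C ⊥ hCphi hCn inferInstance ?_
      intro m hm x
      rw [Subgroup.mem_bot] at hm
      subst hm
      simp only [map_one, MulAut.one_apply, mul_inv_cancel]
      exact one_mem C
    set W := K ⊔ C'' with hWdef
    have hWmul : ((W : Set (N ⋊[φ] M))) = (K : Set _) * (C'' : Set _) := Subgroup.mul_normal K C''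
    set T : Subgroup M := W.comap (inr : M →* N ⋊[φ] M) with hTdef
    set U : Subgroup M := K.map (rightHom : N ⋊[φ] M →* M) with hUdef
    set DC : Subgroup N := W.comap (inl : N →* N ⋊[φ] M) with hDCdef
    have hinlC : ∀ c : N, c ∈ C → inl c ∈ C'' := by
      intro c hcmem
      rw [hC''def, mem_mixSub, left_inl, right_inl]
      exact ⟨hcmem, Subgroup.mem_bot.mpr rfl⟩
    have hCleDC : C ≤ DC := by
      intro c hcmem
      exact Subgroup.mem_comap.mpr (Subgroup.mem_sup_right (hinlC c hcmem))
    have hDCf : DC.FiniteIndex := by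
      refine ⟨fun h0 => hCf.index_ne_zero ?_⟩
      have := Subgroup.index_dvd_of_le hCleDC
      rw [h0] at this
      exact zero_dvd_iff.mp this
    -- DC ⊆ D * C
    have hDCsub : (DC : Set N) ⊆ (D : Set N) * (C : Set N) := by
      intro x hx
      have h1 : inl x ∈ W := Subgroup.mem_comap.mp hx
      rw [← SetLike.mem_coe, hWmul] at h1
      obtain ⟨k, hk, c, hcc, hkc⟩ := h1
      have hcl : c.left ∈ C := (mem_mixSub φ).mp hcc |>.1
      have hcr : c.right = 1 := Subgroup.mem_bot.mp ((mem_mixSub φ).mp hcc).2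
      obtain ⟨n, hn⟩ : ∃ n, c = inl n ∧ n ∈ C := by
        refine ⟨c.left, ?_, hcl⟩
        conv_lhs => rw [← inl_left_mul_inr_right c]
        rw [hcr, map_one, mul_one]
      obtain ⟨hn1, hn2⟩ := hn
      subst hn1
      have hkform : k = inl (x * n⁻¹) := by
        have h5 : k = inl x * (inl n)⁻¹ := by rw [← hkc]; group
        rw [h5, ← map_inv, ← map_mul]
      refine ⟨x * n⁻¹, ?_, n, hn2, by group⟩
      rw [hkform] at hk
      exact hk
    have haDC : a ∉ DC := by
      intro h
      refine hLNs ?_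
      have h1 : a ∈ (D : Set N) * (C : Set N) := hDCsub h
      exact Set.mul_subset_mul_left (SetLike.coe_subset_coe.mpr hCle) h1
    -- key conjugation identity
    have hconj : ∀ k k' : N ⋊[φ] M,
        k * inr (k.right⁻¹ * k'.right) * k'⁻¹ = inl (k.left * k'.left⁻¹) := by
      intro k k'
      obtain ⟨n1, m1⟩ := k
      obtain ⟨n2, m2⟩ := k'
      show (⟨n1, m1⟩ : N ⋊[φ] M) * inr (m1⁻¹ * m2) * (⟨n2, m2⟩ : N ⋊[φ] M)⁻¹ = inl (n1 * n2⁻¹)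
      rw [mk_eq_inl_mul_inr, mk_eq_inl_mul_inr, mul_inv_rev, ← map_inv inr, ← map_inv inl,
        mul_assoc (inl n1), ← map_mul inr, mul_inv_cancel_left, mul_assoc,
        ← mul_assoc (inr m2), ← map_mul inr, mul_inv_cancel, map_one, one_mul, ← map_mul inl]
    have hkey : ∀ k k' : N ⋊[φ] M, k ∈ K → k' ∈ K →
        ((k.right⁻¹ * k'.right ∈ T) ↔ (k.left * k'.left⁻¹ ∈ DC)) := by
      intro k k' hkK hk'K
      have hKW : K ≤ W := le_sup_left
      constructor
      · intro h
        have h1 : inr (k.right⁻¹ * k'.right) ∈ W := Subgroup.mem_comap.mp h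
        have h2 : k * inr (k.right⁻¹ * k'.right) * k'⁻¹ ∈ W :=
          mul_mem (mul_mem (hKW hkK) h1) (inv_mem (hKW hk'K))
        rw [hconj] at h2
        exact Subgroup.mem_comap.mpr h2
      · intro h
        have h1 : inl (k.left * k'.left⁻¹) ∈ W := Subgroup.mem_comap.mp h
        have h2 : inr (φ := φ) (k.right⁻¹ * k'.right)
            = k⁻¹ * inl (k.left * k'.left⁻¹) * k' := by
          rw [← hconj k k']; group
        refine Subgroup.mem_comap.mpr ?_
        rw [h2]
        exact mul_mem (mul_mem (inv_mem (hKW hkK)) h1) (hKW hk'K)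
    -- T is finitely generated
    have hTU : T ≤ U := by
      intro m hm
      have h1 : inr m ∈ W := Subgroup.mem_comap.mp hm
      rw [← SetLike.mem_coe, hWmul] at h1
      obtain ⟨k, hk, c, hcc, hkc⟩ := h1
      have hcr : c.right = 1 := Subgroup.mem_bot.mp ((mem_mixSub φ).mp hcc).2
      refine Subgroup.mem_map.mpr ⟨k, hk, ?_⟩
      have hkform : k = inr m * c⁻¹ := by rw [← hkc]; group
      rw [rightHom_eq_right, hkform, mul_right, right_inr, inv_right, hcr]
      simp
    have hex : ∀ u : U, ∃ k : N ⋊[φ] M, k ∈ K ∧ k.right = (u : M) := by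
      rintro ⟨u, hu⟩
      obtain ⟨k, hk, hku⟩ := Subgroup.mem_map.mp hu
      exact ⟨k, hk, hku⟩
    choose kk hkkK hkkr using hex
    have hF1 : ∀ u u' : U, ((((kk u).left⁻¹ : N) : N ⧸ DC) = ((kk u').left⁻¹ : N))
        ↔ (u : M)⁻¹ * (u' : M) ∈ T := by
      intro u u'
      rw [QuotientGroup.eq, inv_inv, ← hkkr u, ← hkkr u']
      exact (hkey _ _ (hkkK u) (hkkK u')).symm
    haveI : Finite (N ⧸ DC) := DC.finite_quotient_of_finiteIndex
    haveI hfinU : Finite (↥U ⧸ T.subgroupOf U) := by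
      let f : (↥U ⧸ T.subgroupOf U) → N ⧸ DC := fun q =>
        Quotient.liftOn' q (fun u => (((kk u).left⁻¹ : N) : N ⧸ DC)) (by
          intro u u' h
          rw [QuotientGroup.leftRel_apply, Subgroup.mem_subgroupOf] at h
          refine (hF1 u u').mpr ?_
          simpa using h)
      have hinj : Function.Injective f := by
        intro q q'
        refine Quotient.inductionOn₂' q q' ?_
        intro u u' h
        apply Quotient.sound'
        rw [QuotientGroup.leftRel_apply, Subgroup.mem_subgroupOf]
        have h1 : (((kk u).left⁻¹ : N) : N ⧸ DC) = ((kk u').left⁻¹ : N) := h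
        have := (hF1 u u').mp h1
        simpa using this
      exact Finite.of_injective f hinj
    haveI : (T.subgroupOf U).FiniteIndex := Subgroup.finiteIndex_of_finite_quotient
    haveI hUfg : Group.FG ↥U := (Group.fg_iff_subgroup_fg U).mpr (aux_fg_map _ hK)
    haveI : Group.FG (T.subgroupOf U) := Subgroup.fg_of_index_ne_zero _
    have hTfg : T.FG := by
      rw [← Group.fg_iff_subgroup_fg]
      exact Group.fg_of_surjective (f := (Subgroup.subgroupOfEquivOfLe hTU).toMonoidHom)
        (Subgroup.subgroupOfEquivOfLe hTU).surjective
    -- obtain the separating subgroup V of M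
    obtain ⟨V, hVn, hVf, hAvoid⟩ :
        ∃ V : Subgroup M, V.Normal ∧ V.FiniteIndex ∧
          ∀ m' ∈ V, inl a * inr m' ∉ W := by
      by_cases hS : ∃ s : M, inl a * inr s ∈ W
      · obtain ⟨s, hs⟩ := hS
        have hsT : s⁻¹ ∉ T := by
          intro h
          have h1 : inr (φ := φ) s⁻¹ ∈ W := Subgroup.mem_comap.mp h
          have h2 : inl (φ := φ) a ∈ W := by
            have h3 := mul_mem hs h1
            rwa [mul_assoc, ← map_mul, mul_inv_cancel, map_one, mul_one] at h3
          exact haDC (Subgroup.mem_comap.mpr h2)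
        obtain ⟨V, hVn, hVf, hVs⟩ := hMss T hTfg s⁻¹ hsT
        refine ⟨V, hVn, hVf, ?_⟩
        intro m' hm' hmem
        refine hVs ?_
        have h1 : inr (φ := φ) (s⁻¹ * m') ∈ W := by
          have h3 := mul_mem (inv_mem hs) hmem
          have heq : (inl a * inr s)⁻¹ * (inl a * inr m') = inr (φ := φ) (s⁻¹ * m') := by
            rw [mul_inv_rev, mul_assoc, inv_mul_cancel_left, ← map_inv, ← map_mul]
          rwa [heq] at h3
        have h2 : s⁻¹ * m' ∈ T := Subgroup.mem_comap.mpr h1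
        have h4 : s⁻¹ = (s⁻¹ * m') * m'⁻¹ := by group
        rw [h4]
        exact Set.mul_mem_mul h2 (inv_mem hm')
      · push_neg at hS
        exact ⟨⊤, inferInstance, inferInstance, fun m' _ => hS m'⟩
    -- the final finite-index normal subgroup L
    set M₀ : Subgroup M := V ⊓ kerQuot φ C hCphi hCn with hM₀def
    have hM₀n : M₀.Normal := by
      constructor
      intro m₀ hm₀ m
      exact ⟨hVn.conj_mem _ hm₀.1 m, (kerQuot_normal φ C hCphi hCn).conj_mem _ hm₀.2 m⟩
    have hM₀f : M₀.FiniteIndex := by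
      haveI := hVf
      haveI := kerQuot_finiteIndex φ C hCphi hCn hCf
      exact inferInstance
    have hLnorm : (mixSub φ C M₀ hCphi).Normal :=
      mixSub_normal φ C M₀ hCphi hCn hM₀n (fun m hm x => hm.2 x)
    refine ⟨mixSub φ C M₀ hCphi, hLnorm, mixSub_finiteIndex φ C M₀ hCphi hCf hM₀f, ?_⟩
    intro hmem
    obtain ⟨k₁, hk₁, l, hl, hkl⟩ := hmem
    set x : N ⋊[φ] M := k₀ * l⁻¹ * k₀⁻¹ with hxdef
    have hx : x ∈ mixSub φ C M₀ hCphi := hLnorm.conj_mem _ (inv_mem hl) k₀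
    obtain ⟨hcx, hmx⟩ := (mem_mixSub φ).mp hx
    have heq1 : k₁ * k₀⁻¹ = inl a * x := by
      have h1 : k₁ = g * l⁻¹ := by rw [← hkl]; group
      rw [h1, hga, hxdef]; group
    have heq3 : ∀ y : N ⋊[φ] M, y * inl (φ y.right⁻¹ y.left⁻¹) = inr y.right := by
      intro y
      obtain ⟨n, m⟩ := y
      show (⟨n, m⟩ : N ⋊[φ] M) * inl (φ m⁻¹ n⁻¹) = inr m
      rw [mk_eq_inl_mul_inr, mul_assoc]
      have h6 : inr (φ := φ) m * inl (φ m⁻¹ n⁻¹) = inl n⁻¹ * inr m := by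
        have h7 := inl_aut (φ := φ) m (φ m⁻¹ n⁻¹)
        rw [aux_phi_comp] at h7
        rw [h7, mul_assoc, ← map_mul inr, inv_mul_cancel, map_one, mul_one]
      rw [h6, ← mul_assoc, ← map_mul inl, mul_inv_cancel, map_one, one_mul]
    have heq2 : inl a * inr x.right = (k₁ * k₀⁻¹) * inl (φ x.right⁻¹ x.left⁻¹) := by
      rw [heq1, mul_assoc, heq3 x]
    have hmemW : inl a * inr x.right ∈ W := by
      rw [heq2]
      have hKW : K ≤ W := le_sup_left
      refine mul_mem (mul_mem (hKW hk₁) (inv_mem (hKW hk₀K))) ?_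
      exact Subgroup.mem_sup_right (hinlC _ (hCphi _ _ (inv_mem hcx)))
    exact hAvoid x.right hmx.1 hmemW
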